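/- Take R = ℤ/2ℤ and let 3 < k ≤ n. Then Σ_{j=0}^{k−2}(1^{⊗j} ⊗ Δ_2 ⊗ 1^{⊗(k−2−j)})(Δ_{k−1}(P)) equals the sum, each summand with coefficient 1, of exactly the admissible basis tensors of C^{⊗k} that are singly attached (in particular, every doubly attached term cancels and no unattached term occurs). -/

import Mathlib

noncomputable section

/-- Cells of an `n`-gon: `v i` models the vertex `v_{i+1}`, `e i` models the edge `e_{i+1}`
(so indices are 0-based), and `F` models the 2-cell `P`. -/
inductive Cell (n : ℕ) : Type where
  | v : Fin n → Cell n
  | e : Fin n → Cell n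
  | F : Cell n
deriving DecidableEq

/-- `Tens R n k` models `C^{⊗ k}`, the free `R`-module on `k`-tuples of cells. -/
abbrev Tens (R : Type) [CommRing R] (n k : ℕ) : Type := (Fin k → Cell n) →₀ R

/-- The basis tensor corresponding to a tuple of cells. -/
def bt (R : Type) [CommRing R] {n k : ℕ} (x : Fin k → Cell n) : Tens R n k :=
  Finsupp.single x 1

/-- Degree of a cell. -/
def degC {n : ℕ} : Cell n → ℕ
  | .v _ => 0
  | .e _ => 1
  | .F => 2

/-- `(-1)^m` in `R`. -/
def sgn (R : Type) [CommRing R] (m : ℤ) : R := if Even m then 1 else -1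

/-- The boundary operator on basis cells: `∂(v_i) = 0`, `∂(e_i) = v_{i+1} - v_i` for `i < n`,
`∂(e_n) = v_n - v_1`, `∂(P) = e_1 + ⋯ + e_{n-1} - e_n`. -/
def dB (R : Type) [CommRing R] (n : ℕ) : Cell n → Tens R n 1
  | .v _ => 0
  | .e i =>
      if h : (i : ℕ) + 1 < n then
        bt R (fun _ => Cell.v ⟨(i : ℕ) + 1, h⟩) - bt R (fun _ => Cell.v i)
      else
        bt R (fun _ => Cell.v i) - bt R (fun _ => Cell.v ⟨0, i.pos⟩)
  | .F => ∑ i : Fin n, (if (i : ℕ) + 1 < n then (1 : R) else -1) • bt R (fun _ => Cell.e i)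

/-- `Σ_{0<i_1<⋯<i_k<n} e_{i_1} ⊗ ⋯ ⊗ e_{i_k}` (with 0-based indices: strictly increasing
tuples of edge indices all `< n-1`). -/
def esum (R : Type) [CommRing R] (n k : ℕ) : Tens R n k :=
  ∑ f : Fin k → Fin n,
    if (∀ p q : Fin k, p < q → f p < f q) ∧ (∀ p : Fin k, ((f p) : ℕ) + 1 < n) then
      bt R (fun p => Cell.e (f p))
    else 0

/-- The `A_∞`-coalgebra operations on basis cells: `DeltaB R n 2` is the Kravatz diagonal
`Δ₂` and for `k ≥ 3`, `DeltaB R n k` is `Δ_k`, which vanishes on vertices and edges and sends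
`P` to `Σ_{0<i_1<⋯<i_k<n} e_{i_1} ⊗ ⋯ ⊗ e_{i_k}`. -/
def DeltaB (R : Type) [CommRing R] (n : ℕ) (k : ℕ) : Cell n → Tens R n k
  | .v i => if k = 2 then bt R (fun _ => Cell.v i) else 0
  | .e i =>
      if k = 2 then
        if h : (i : ℕ) + 1 < n then
          bt R (fun p => if (p : ℕ) = 0 then Cell.v i else Cell.e i) +
            bt R (fun p => if (p : ℕ) = 0 then Cell.e i else Cell.v ⟨(i : ℕ) + 1, h⟩)
        else
          bt R (fun p => if (p : ℕ) = 0 then Cell.v ⟨0, i.pos⟩ else Cell.e i) +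
            bt R (fun p => if (p : ℕ) = 0 then Cell.e i else Cell.v i)
      else 0
  | .F =>
      esum R n k +
        (if h : k = 2 ∧ 0 < n then
          bt R (fun p => if (p : ℕ) = 0 then Cell.v ⟨0, h.2⟩ else Cell.F) +
            bt R (fun p => if (p : ℕ) = 0 then Cell.F
                  else Cell.v ⟨n - 1, Nat.sub_lt h.2 Nat.one_pos⟩)
        else 0)

/-- Extension of a map defined on basis tensors to a linear map. -/
def lext (R : Type) [CommRing R] (n : ℕ) {k m : ℕ} (φ : (Fin k → Cell n) → Tens R n m) :
    Tens R n k →ₗ[R] Tens R n m :=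
  Finsupp.linearCombination R φ

/-- Splicing a `j`-tuple into a `k`-tuple at position `a`, producing an `m`-tuple
(meaningful when `m = k + j - 1` and `a < k`). -/
def splice {n k j : ℕ} (m a : ℕ) (x : Fin k → Cell n) (y : Fin j → Cell n) :
    Fin m → Cell n := fun q =>
  if h1 : (q : ℕ) < a ∧ (q : ℕ) < k then x ⟨q, h1.2⟩
  else if h2 : a ≤ (q : ℕ) ∧ (q : ℕ) - a < j then y ⟨(q : ℕ) - a, h2.2⟩
  else if h3 : (q : ℕ) + 1 - j < k then x ⟨(q : ℕ) + 1 - j, h3⟩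
  else Cell.F

/-- `opp R n k m j a p g` is the linear map `1^{⊗a} ⊗ g ⊗ 1^{⊗(k-1-a)} : C^{⊗k} → C^{⊗m}`
(meaningful when `m = k + j - 1`), where `g` is the basis-level description of an operation
`C → C^{⊗j}` of degree `p`, evaluated with the Koszul sign convention. -/
def opp (R : Type) [CommRing R] (n : ℕ) (k m j a : ℕ) (p : ℤ) (g : Cell n → Tens R n j) :
    Tens R n k →ₗ[R] Tens R n m :=
  lext R n fun x =>
    if ha : a < k then
      sgn R (p * ∑ q : Fin k, if (q : ℕ) < a then (degC (x q) : ℤ) else 0) •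
        Finsupp.mapDomain (splice m a x) (g (x ⟨a, ha⟩))
    else 0

/-- `Δ_k` as a linear map `C → C^{⊗k}`. -/
def Dmap (R : Type) [CommRing R] (n k : ℕ) : Tens R n 1 →ₗ[R] Tens R n k :=
  lext R n fun x => DeltaB R n k (x 0)

/-- The boundary `∂` as a linear map `C → C`. -/
def bdry (R : Type) [CommRing R] (n : ℕ) : Tens R n 1 →ₗ[R] Tens R n 1 :=
  lext R n fun x => dB R n (x 0)

/-- The top cell `P` as a chain. -/
def cellP (R : Type) [CommRing R] (n : ℕ) : Tens R n 1 := bt R (fun _ => Cell.F)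

end

/-- A basis tensor `x` is admissible with vertex `v_m` (0-based index `m`) in position `p`:
`x p = v_m`, all other factors are edges `e_i` with `i + 1 < n` (1-based index `< n`) in
strictly increasing index order, the edge immediately to the left of `v_m` (if any) has
1-based index `< m` and that immediately to the right (if any) has 1-based index `≥ m`. -/
def Adm {n k : ℕ} (x : Fin k → Cell n) (p : Fin k) (m : Fin n) : Prop :=
  x p = Cell.v m ∧
  (∀ q : Fin k, q ≠ p → ∃ i : Fin n, x q = Cell.e i ∧ (i : ℕ) + 1 < n) ∧
  (∀ q r : Fin k, q < r → q ≠ p → r ≠ p →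
    ∀ i j : Fin n, x q = Cell.e i → x r = Cell.e j → i < j) ∧
  (∀ (_ : 0 < (p : ℕ)) (i : Fin n),
    x ⟨(p : ℕ) - 1, by have := p.isLt; omega⟩ = Cell.e i → i < m) ∧
  (∀ (h : (p : ℕ) + 1 < k) (j : Fin n), x ⟨(p : ℕ) + 1, h⟩ = Cell.e j → m ≤ j)

/-- `x` is left attached: the factor immediately to the left of the vertex `v_m` is `e_{m-1}`
(1-based; 0-based this is the edge of index `m - 1` to the left of the vertex of index `m`). -/
def LeftAtt {n k : ℕ} (x : Fin k → Cell n) (p : Fin k) (m : Fin n) : Prop :=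
  ∃ _ : 0 < (p : ℕ), ∃ _ : 0 < (m : ℕ),
    x ⟨(p : ℕ) - 1, by have := p.isLt; omega⟩ =
      Cell.e ⟨(m : ℕ) - 1, by have := m.isLt; omega⟩

/-- `x` is right attached: the factor immediately to the right of the vertex `v_m` is `e_m`. -/
def RightAtt {n k : ℕ} (x : Fin k → Cell n) (p : Fin k) (m : Fin n) : Prop :=
  ∃ h : (p : ℕ) + 1 < k, x ⟨(p : ℕ) + 1, h⟩ = Cell.e m

/-- `x` is singly attached: left attached or right attached but not both. -/
def SinglyAtt {n k : ℕ} (x : Fin k → Cell n) (p : Fin k) (m : Fin n) : Prop :=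
  (LeftAtt x p m ∧ ¬ RightAtt x p m) ∨ (¬ LeftAtt x p m ∧ RightAtt x p m)

/-- `x` is unattached: neither left attached nor right attached. -/
def Unatt {n k : ℕ} (x : Fin k → Cell n) (p : Fin k) (m : Fin n) : Prop :=
  ¬ LeftAtt x p m ∧ ¬ RightAtt x p m

/-- `x` is minimally extreme: its first factor is `v₁` (0-based: the vertex of index 0). -/
def MinExt {n k : ℕ} (x : Fin k → Cell n) : Prop :=
  ∃ (h : 0 < k) (h0 : 0 < n), x ⟨0, h⟩ = Cell.v ⟨0, h0⟩

/-- `x` is maximally extreme: its last factor is `v_n`. -/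
def MaxExt {n k : ℕ} (x : Fin k → Cell n) : Prop :=
  ∃ (h : 0 < k) (h0 : 0 < n), x ⟨k - 1, by omega⟩ = Cell.v ⟨n - 1, by omega⟩

-- aux defs
section Aux
variable {n k : ℕ}

def Inc (n : ℕ) {k' : ℕ} (f : Fin k' → Fin n) : Prop :=
  (∀ p q : Fin k', p < q → f p < f q) ∧ (∀ p : Fin k', ((f p) : ℕ) + 1 < n)

def SL (n k : ℕ) (j : Fin (k-1)) (f : Fin (k-1) → Fin n) : Fin k → Cell n :=
  splice k j (fun p => Cell.e (f p))
    (fun p : Fin 2 => if (p:ℕ) = 0 then Cell.v (f j) else Cell.e (f j))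

def SR (n k : ℕ) (j : Fin (k-1)) (f : Fin (k-1) → Fin n) : Fin k → Cell n :=
  splice k j (fun p => Cell.e (f p))
    (fun p : Fin 2 => if (p:ℕ) = 0 then Cell.e (f j)
      else Cell.v ⟨((f j : ℕ) + 1) % n, Nat.mod_lt _ (f j).pos⟩)

lemma splice2_apply (a : ℕ) (ha : a < k - 1) (x : Fin (k-1) → Cell n) (y : Fin 2 → Cell n)
    (q : Fin k) :
    splice k a x y q =
      if h1 : (q:ℕ) < a then x ⟨q, by omega⟩
      else if h2 : (q:ℕ) = a then y 0
      else if h3 : (q:ℕ) = a + 1 then y 1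
      else x ⟨(q:ℕ) - 1, by have := q.isLt; omega⟩ := by
  have hq := q.isLt
  unfold splice
  split_ifs with h1 h2 h3 <;>
    first
      | rfl
      | omega
      | (congr 1; apply Fin.ext; simp; omega)
      | (rw [dif_neg (by omega), dif_pos (by omega)]; congr 1; apply Fin.ext; simp; omega)
      | (rw [dif_neg (by omega), dif_neg (by omega), dif_pos (by omega)]; congr 1; apply Fin.ext; simp; omega)

def eIdx {n : ℕ} (hn : 0 < n) : Cell n → Fin n
  | .e i => i
  | _ => ⟨0, hn⟩

def fx {n k : ℕ} (hn : 0 < n) (x : Fin k → Cell n) (p : Fin k) : Fin (k-1) → Fin n :=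
  fun q => eIdx hn (x ⟨if (q:ℕ) < (p:ℕ) then (q:ℕ) else (q:ℕ)+1,
    by have := q.isLt; have := p.isLt; split <;> omega⟩)

/-- The key pointwise description of `SL`. -/
lemma SL_apply (j : Fin (k-1)) (f : Fin (k-1) → Fin n) (q : Fin k) :
    SL n k j f q =
      if h1 : (q:ℕ) < (j:ℕ) then Cell.e (f ⟨q, by have := j.isLt; omega⟩)
      else if h2 : (q:ℕ) = (j:ℕ) then Cell.v (f j)
      else if h3 : (q:ℕ) = (j:ℕ) + 1 then Cell.e (f j)
      else Cell.e (f ⟨(q:ℕ) - 1, by have := q.isLt; have := j.isLt; omega⟩) := by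
  rw [SL, splice2_apply (j:ℕ) j.isLt]
  split_ifs <;> simp_all

lemma SR_apply (j : Fin (k-1)) (f : Fin (k-1) → Fin n) (q : Fin k) :
    SR n k j f q =
      if h1 : (q:ℕ) < (j:ℕ) then Cell.e (f ⟨q, by have := j.isLt; omega⟩)
      else if h2 : (q:ℕ) = (j:ℕ) then Cell.e (f j)
      else if h3 : (q:ℕ) = (j:ℕ) + 1 then
        Cell.v ⟨((f j : ℕ) + 1) % n, Nat.mod_lt _ (f j).pos⟩
      else Cell.e (f ⟨(q:ℕ) - 1, by have := q.isLt; have := j.isLt; omega⟩) := by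
  rw [SR, splice2_apply (j:ℕ) j.isLt]
  split_ifs <;> simp_all

lemma fx_lt {n k : ℕ} (hn : 0 < n) (x : Fin k → Cell n) (p : Fin k) (q : Fin (k-1))
    (h : (q:ℕ) < (p:ℕ)) :
    fx hn x p q = eIdx hn (x ⟨(q:ℕ), by have := q.isLt; omega⟩) := by
  simp only [fx]
  congr 2
  apply Fin.ext
  simp [h]

lemma fx_ge {n k : ℕ} (hn : 0 < n) (x : Fin k → Cell n) (p : Fin k) (q : Fin (k-1))
    (h : ¬ (q:ℕ) < (p:ℕ)) :
    fx hn x p q = eIdx hn (x ⟨(q:ℕ)+1, by have := q.isLt; omega⟩) := by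
  simp only [fx]
  congr 2
  apply Fin.ext
  simp [h]

end Aux

section Aux2
variable {n k : ℕ}

lemma SL_eq_adm (j : Fin (k-1)) (f : Fin (k-1) → Fin n) (hf : Inc n f)
    (x : Fin k → Cell n) (hx : SL n k j f = x) :
    Adm x ⟨j, by have := j.isLt; omega⟩ (f j) ∧
      RightAtt x ⟨j, by have := j.isLt; omega⟩ (f j) := by
  subst hx
  have hj := j.isLt
  refine ⟨⟨?_, ?_, ?_, ?_, ?_⟩, ?_⟩
  · rw [SL_apply]
    rw [dif_neg (by simp), dif_pos (by simp)]
  · intro q hq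
    have hq' : (q:ℕ) ≠ (j:ℕ) := by simpa [Fin.ext_iff] using hq
    rw [SL_apply]
    split_ifs <;> first | exact ⟨_, rfl, hf.2 _⟩ | (exfalso; omega)
  · intro q r hqr hq hr i i' hxq hxr
    have hq' : (q:ℕ) ≠ (j:ℕ) := by simpa [Fin.ext_iff] using hq
    have hr' : (r:ℕ) ≠ (j:ℕ) := by simpa [Fin.ext_iff] using hr
    have hqk := q.isLt; have hrk := r.isLt
    rw [Fin.lt_def] at hqr
    rw [SL_apply] at hxq hxr
    split_ifs at hxq hxr <;>
      first
        | (rw [Cell.e.injEq] at hxq hxr; subst hxq; subst hxr;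
           exact hf.1 _ _ (by rw [Fin.lt_def]; simp; omega))
        | simp at hxq
        | simp at hxr
  · intro hp i hxi
    simp only at hp
    rw [SL_apply] at hxi
    rw [dif_pos (by simp <;> omega)] at hxi
    injection hxi with h1; subst h1
    exact hf.1 _ _ (by rw [Fin.lt_def]; simp; omega)
  · intro h i' hxi
    rw [SL_apply] at hxi
    rw [dif_neg (by simp), dif_neg (by simp), dif_pos (by simp)] at hxi
    injection hxi with h1; subst h1
    exact le_refl _
  · refine ⟨by simp; omega, ?_⟩
    rw [SL_apply]
    rw [dif_neg (by simp), dif_neg (by simp), dif_pos (by simp)]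

lemma SR_eq_adm (j : Fin (k-1)) (f : Fin (k-1) → Fin n) (hf : Inc n f)
    (x : Fin k → Cell n) (hx : SR n k j f = x) :
    Adm x ⟨(j:ℕ)+1, by have := j.isLt; omega⟩
        ⟨((f j : ℕ) + 1) % n, Nat.mod_lt _ (f j).pos⟩ ∧
      LeftAtt x ⟨(j:ℕ)+1, by have := j.isLt; omega⟩
        ⟨((f j : ℕ) + 1) % n, Nat.mod_lt _ (f j).pos⟩ := by
  subst hx
  have hj := j.isLt
  have hmod : ((f j : ℕ) + 1) % n = (f j : ℕ) + 1 := Nat.mod_eq_of_lt (hf.2 j)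
  refine ⟨⟨?_, ?_, ?_, ?_, ?_⟩, ?_⟩
  · rw [SR_apply]
    rw [dif_neg (by simp), dif_neg (by simp), dif_pos (by simp)]
  · intro q hq
    have hq' : (q:ℕ) ≠ (j:ℕ) + 1 := by simpa [Fin.ext_iff] using hq
    rw [SR_apply]
    split_ifs <;> first | exact ⟨_, rfl, hf.2 _⟩ | (exfalso; omega)
  · intro q r hqr hq hr i i' hxq hxr
    have hq' : (q:ℕ) ≠ (j:ℕ) + 1 := by simpa [Fin.ext_iff] using hq
    have hr' : (r:ℕ) ≠ (j:ℕ) + 1 := by simpa [Fin.ext_iff] using hr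
    have hqk := q.isLt; have hrk := r.isLt
    rw [Fin.lt_def] at hqr
    rw [SR_apply] at hxq hxr
    split_ifs at hxq hxr <;>
      first
        | (rw [Cell.e.injEq] at hxq hxr; subst hxq; subst hxr;
           exact hf.1 _ _ (by rw [Fin.lt_def]; simp; omega))
        | simp at hxq
        | simp at hxr
  · intro hp i hxi
    rw [SR_apply] at hxi
    rw [dif_neg (by simp), dif_pos (by simp)] at hxi
    rw [Cell.e.injEq] at hxi; subst hxi
    rw [Fin.lt_def]; simp; omega
  · intro h i' hxi
    have hk2 : (j:ℕ) + 1 < k - 1 := by simp at h; omega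
    rw [SR_apply] at hxi
    rw [dif_neg (by simp <;> omega), dif_neg (by simp <;> omega),
      dif_neg (by simp <;> omega)] at hxi
    rw [Cell.e.injEq] at hxi; subst hxi
    have := hf.1 j ⟨(j:ℕ)+1, hk2⟩ (by rw [Fin.lt_def]; simp)
    rw [Fin.lt_def] at this
    rw [Fin.le_def]
    simp at this ⊢
    omega
  · refine ⟨by simp, by simp; omega, ?_⟩
    rw [SR_apply]
    rw [dif_neg (by simp), dif_pos (by simp)]
    congr 1
    apply Fin.ext
    simp
    omega

lemma SL_eq_fx (hn : 0 < n) (j : Fin (k-1)) (f : Fin (k-1) → Fin n)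
    (x : Fin k → Cell n) (hx : SL n k j f = x) :
    f = fx hn x ⟨j, by have := j.isLt; omega⟩ := by
  subst hx
  funext q
  have hq := q.isLt; have hj := j.isLt
  by_cases hlt : (q:ℕ) < (j:ℕ)
  · rw [fx_lt hn _ _ _ hlt, SL_apply, dif_pos (by simpa using hlt)] <;>
      (simp only [eIdx]; try exact congrArg f (Fin.ext (by simp)))
  · rw [fx_ge hn _ _ _ hlt]
    rcases eq_or_ne (q:ℕ) (j:ℕ) with he | hne
    · rw [SL_apply, dif_neg (by simp <;> omega), dif_neg (by simp <;> omega),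
        dif_pos (by simp <;> omega)]
      simp only [eIdx]
      exact congrArg f (Fin.ext (by simp [he]))
    · rw [SL_apply, dif_neg (by simp <;> omega), dif_neg (by simp <;> omega),
        dif_neg (by simp <;> omega)]
      simp only [eIdx]
      exact congrArg f (Fin.ext (by simp))

lemma SR_eq_fx (hn : 0 < n) (j : Fin (k-1)) (f : Fin (k-1) → Fin n)
    (x : Fin k → Cell n) (hx : SR n k j f = x) :
    f = fx hn x ⟨(j:ℕ)+1, by have := j.isLt; omega⟩ := by
  subst hx
  funext q
  have hq := q.isLt; have hj := j.isLt
  by_cases hlt : (q:ℕ) < (j:ℕ) + 1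
  · rw [fx_lt hn _ _ _ (by simpa using hlt)]
    rcases eq_or_ne (q:ℕ) (j:ℕ) with he | hne
    · rw [SR_apply, dif_neg (by simp <;> omega), dif_pos (by simp <;> omega)]
      simp only [eIdx]
      exact congrArg f (Fin.ext (by simp [he]))
    · rw [SR_apply, dif_pos (by simp <;> omega)] <;>
        (simp only [eIdx]; try exact congrArg f (Fin.ext (by simp)))
  · rw [fx_ge hn _ _ _ (by simpa using hlt)]
    rw [SR_apply, dif_neg (by simp <;> omega), dif_neg (by simp <;> omega),
      dif_neg (by simp <;> omega)]
    simp only [eIdx]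
    exact congrArg f (Fin.ext (by simp))

lemma adm_unique {x : Fin k → Cell n} {p p' : Fin k} {m m' : Fin n}
    (h : Adm x p m) (h' : Adm x p' m') : p = p' ∧ m = m' := by
  have hpp : p = p' := by
    by_contra hne
    obtain ⟨i, hi, -⟩ := h.2.1 p' (fun hh => hne hh.symm)
    rw [h'.1] at hi
    cases hi
  subst hpp
  have hv := h.1.symm.trans h'.1
  exact ⟨rfl, by injection hv⟩

lemma fx_spec (hn : 0 < n) {x : Fin k → Cell n} {p : Fin k} {m : Fin n}
    (ha : Adm x p m) (q : Fin (k-1)) (t : Fin k)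
    (ht : (t:ℕ) = if (q:ℕ) < (p:ℕ) then (q:ℕ) else (q:ℕ)+1) :
    x t = Cell.e (fx hn x p q) ∧ ((fx hn x p q):ℕ) + 1 < n := by
  have hq := q.isLt
  by_cases hlt : (q:ℕ) < (p:ℕ)
  · rw [if_pos hlt] at ht
    rw [fx_lt hn x p q hlt]
    obtain ⟨i, hi, hb⟩ := ha.2.1 ⟨(q:ℕ), by omega⟩ (by simp [Fin.ext_iff]; omega)
    have htq : t = ⟨(q:ℕ), by omega⟩ := Fin.ext ht
    rw [htq, hi]
    exact ⟨by simp [eIdx], by simpa [eIdx] using hb⟩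
  · rw [if_neg hlt] at ht
    rw [fx_ge hn x p q hlt]
    obtain ⟨i, hi, hb⟩ := ha.2.1 ⟨(q:ℕ)+1, by omega⟩ (by simp [Fin.ext_iff]; omega)
    have htq : t = ⟨(q:ℕ)+1, by omega⟩ := Fin.ext ht
    rw [htq, hi]
    exact ⟨by simp [eIdx], by simpa [eIdx] using hb⟩

lemma fx_inc (hn : 0 < n) {x : Fin k → Cell n} {p : Fin k} {m : Fin n}
    (ha : Adm x p m) : Inc n (fx hn x p) := by
  have hp := p.isLt
  constructor
  · intro q r hqr
    have hq := q.isLt; have hr := r.isLt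
    rw [Fin.lt_def] at hqr
    by_cases hlq : (q:ℕ) < (p:ℕ) <;> by_cases hlr : (r:ℕ) < (p:ℕ)
    · exact ha.2.2.1 ⟨(q:ℕ), by omega⟩ ⟨(r:ℕ), by omega⟩
        (by rw [Fin.mk_lt_mk]; omega)
        (by simp [Fin.ext_iff]; omega) (by simp [Fin.ext_iff]; omega)
        _ _ (fx_spec hn ha q ⟨(q:ℕ), by omega⟩ (by simp [hlq])).1
        (fx_spec hn ha r ⟨(r:ℕ), by omega⟩ (by simp [hlr])).1
    · exact ha.2.2.1 ⟨(q:ℕ), by omega⟩ ⟨(r:ℕ)+1, by omega⟩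
        (by rw [Fin.mk_lt_mk]; omega)
        (by simp [Fin.ext_iff]; omega) (by simp [Fin.ext_iff]; omega)
        _ _ (fx_spec hn ha q ⟨(q:ℕ), by omega⟩ (by simp [hlq])).1
        (fx_spec hn ha r ⟨(r:ℕ)+1, by omega⟩ (by simp [hlr])).1
    · exact absurd (by omega : (q:ℕ) < (p:ℕ)) hlq
    · exact ha.2.2.1 ⟨(q:ℕ)+1, by omega⟩ ⟨(r:ℕ)+1, by omega⟩
        (by rw [Fin.mk_lt_mk]; omega)
        (by simp [Fin.ext_iff]; omega) (by simp [Fin.ext_iff]; omega)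
        _ _ (fx_spec hn ha q ⟨(q:ℕ)+1, by omega⟩ (by simp [hlq])).1
        (fx_spec hn ha r ⟨(r:ℕ)+1, by omega⟩ (by simp [hlr])).1
  · intro q
    have hq := q.isLt
    by_cases hlt : (q:ℕ) < (p:ℕ)
    · exact (fx_spec hn ha q ⟨(q:ℕ), by omega⟩ (by simp [hlt])).2
    · exact (fx_spec hn ha q ⟨(q:ℕ)+1, by omega⟩ (by simp [hlt])).2

lemma adm_right_SL (hn : 0 < n) {x : Fin k → Cell n} {p : Fin k} {m : Fin n}
    (ha : Adm x p m) (hr : RightAtt x p m) :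
    ∃ hj : (p:ℕ) < k - 1, SL n k ⟨(p:ℕ), hj⟩ (fx hn x p) = x := by
  obtain ⟨h1, hPr⟩ := hr
  have hp := p.isLt
  refine ⟨by omega, ?_⟩
  have hfxp : fx hn x p ⟨(p:ℕ), by omega⟩ = m := by
    have := (fx_spec hn ha ⟨(p:ℕ), by omega⟩ ⟨(p:ℕ)+1, h1⟩ (by simp)).1
    rw [hPr] at this
    injection this with h; exact h.symm
  funext q
  have hq := q.isLt
  rw [SL_apply]
  split_ifs with hc1 hc2 hc3
  · have hc1' : (q:ℕ) < (p:ℕ) := by simpa using hc1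
    exact (fx_spec hn ha ⟨(q:ℕ), by omega⟩ q (by simp [hc1'])).1.symm
  · rw [hfxp]
    have : q = p := Fin.ext (by simpa using hc2)
    rw [this, ha.1]
  · rw [hfxp]
    have : q = ⟨(p:ℕ)+1, h1⟩ := Fin.ext (by simpa using hc3)
    rw [this, hPr]
  · simp only [] at hc1 hc2 hc3
    have hge : (p:ℕ) + 1 < (q:ℕ) := by
      simp [Fin.ext_iff] at hc1 hc2 hc3; omega
    have hcond : ¬((q:ℕ) - 1 < (p:ℕ)) := by omega
    exact (fx_spec hn ha ⟨(q:ℕ)-1, by omega⟩ q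
      (by simp [hcond]; omega)).1.symm

lemma adm_left_SR (hn : 0 < n) {x : Fin k → Cell n} {p : Fin k} {m : Fin n}
    (ha : Adm x p m) (hl : LeftAtt x p m) :
    ∃ (hp0 : 0 < (p:ℕ)) (hj : (p:ℕ) - 1 < k - 1),
      SR n k ⟨(p:ℕ)-1, hj⟩ (fx hn x p) = x := by
  obtain ⟨hp0, hm0, hPl⟩ := hl
  have hp := p.isLt
  have hm := m.isLt
  refine ⟨hp0, by omega, ?_⟩
  have hcondp : (p:ℕ) - 1 < (p:ℕ) := by omega
  have hfxp : fx hn x p ⟨(p:ℕ)-1, by omega⟩ = ⟨(m:ℕ)-1, by omega⟩ := by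
    have := (fx_spec hn ha ⟨(p:ℕ)-1, by omega⟩ ⟨(p:ℕ)-1, by omega⟩ (by simp [hcondp])).1
    rw [hPl] at this
    injection this with h; exact h.symm
  funext q
  have hq := q.isLt
  rw [SR_apply]
  split_ifs with hc1 hc2 hc3
  · have hc1' : (q:ℕ) < (p:ℕ) - 1 := by simpa using hc1
    have hcond : (q:ℕ) < (p:ℕ) := by omega
    exact (fx_spec hn ha ⟨(q:ℕ), by omega⟩ q (by simp [hcond])).1.symm
  · have hc2' : (q:ℕ) = (p:ℕ) - 1 := by simpa using hc2
    exact (fx_spec hn ha ⟨(p:ℕ)-1, by omega⟩ q (by simp [hcondp]; omega)).1.symm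
  · rw [hfxp]
    have hqp : q = p := Fin.ext (by simp at hc3; omega)
    rw [hqp, ha.1]
    congr 1
    apply Fin.ext
    simp
    rw [Nat.mod_eq_of_lt (by omega : (m:ℕ) - 1 + 1 < n)]
    omega
  · have hc1' : ¬((q:ℕ) < (p:ℕ) - 1) := by simpa using hc1
    have hc2' : (q:ℕ) ≠ (p:ℕ) - 1 := by simpa using hc2
    have hc3' : (q:ℕ) ≠ (p:ℕ) - 1 + 1 := by simpa using hc3
    have hcond : ¬((q:ℕ) - 1 < (p:ℕ)) := by omega
    exact (fx_spec hn ha ⟨(q:ℕ)-1, by omega⟩ q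
      (by simp [hcond]; omega)).1.symm

instance {n k' : ℕ} (f : Fin k' → Fin n) : Decidable (Inc n f) :=
  decidable_of_iff ((∀ p q : Fin k', p < q → f p < f q) ∧
    (∀ p : Fin k', ((f p) : ℕ) + 1 < n)) Iff.rfl

lemma opp_bt {n : ℕ} (kk m jj a : ℕ) (pdeg : ℤ) (g : Cell n → Tens (ZMod 2) n jj)
    (y : Fin kk → Cell n) :
    (opp (ZMod 2) n kk m jj a pdeg g) (bt (ZMod 2) y) =
      if ha : a < kk then
        sgn (ZMod 2) (pdeg * ∑ q : Fin kk, if (q : ℕ) < a then (degC (y q) : ℤ) else 0) •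
          Finsupp.mapDomain (splice m a y) (g (y ⟨a, ha⟩))
      else 0 := by
  simp [opp, lext, bt, Finsupp.linearCombination_single]

lemma opp_esum_term (hk : 3 < k) (j : Fin (k-1)) (f : Fin (k-1) → Fin n) (hC : Inc n f)
    (x : Fin k → Cell n) :
    ((opp (ZMod 2) n (k-1) k 2 (j:ℕ) 0 (DeltaB (ZMod 2) n 2))
        (bt (ZMod 2) (fun p => Cell.e (f p)))) x
      = (if SL n k j f = x then (1:ZMod 2) else 0) +
        (if SR n k j f = x then (1:ZMod 2) else 0) := by
  rw [opp_bt, dif_pos j.isLt]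
  rw [show ((0:ℤ) * ∑ q : Fin (k-1), if (q : ℕ) < (j:ℕ) then
        ((degC ((fun p => Cell.e (f p)) q) : ℕ) : ℤ) else 0) = 0 from zero_mul _]
  rw [show sgn (ZMod 2) 0 = 1 from if_pos Even.zero, one_smul]
  have hDe : DeltaB (ZMod 2) n 2 ((fun p => Cell.e (f p)) ⟨(j:ℕ), j.isLt⟩) =
      bt (ZMod 2) (fun p : Fin 2 => if (p:ℕ) = 0 then Cell.v (f j) else Cell.e (f j)) +
      bt (ZMod 2) (fun p : Fin 2 => if (p:ℕ) = 0 then Cell.e (f j)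
        else Cell.v ⟨((f j : ℕ) + 1) % n, Nat.mod_lt _ (f j).pos⟩) := by
    show DeltaB (ZMod 2) n 2 (Cell.e (f j)) = _
    simp only [DeltaB, if_pos rfl]
    rw [dif_pos (hC.2 j)]
    simp only [if_true]
    congr 2
    funext p
    by_cases hp : (p:ℕ) = 0
    · simp [hp]
    · simp only [hp, if_false]
      congr 1
      exact (Fin.ext (Nat.mod_eq_of_lt (hC.2 j))).symm
  rw [hDe, Finsupp.mapDomain_add]
  unfold bt
  rw [Finsupp.mapDomain_single, Finsupp.mapDomain_single]
  rw [Finsupp.add_apply, Finsupp.single_apply, Finsupp.single_apply]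
  rfl

open Finsupp in
lemma LHS_eval (hn : 3 ≤ n) (hk : 3 < k) (x : Fin k → Cell n) :
    (∑ j ∈ Finset.range (k - 1),
        (opp (ZMod 2) n (k - 1) k 2 j 0 (DeltaB (ZMod 2) n 2))
          (DeltaB (ZMod 2) n (k - 1) Cell.F)) x =
    ∑ j : Fin (k-1), ∑ f : Fin (k-1) → Fin n,
      ((if Inc n f ∧ SL n k j f = x then (1:ZMod 2) else 0) +
       (if Inc n f ∧ SR n k j f = x then (1:ZMod 2) else 0)) := by
  have hD : DeltaB (ZMod 2) n (k-1) Cell.F = esum (ZMod 2) n (k-1) := by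
    simp only [DeltaB]
    rw [dif_neg (by omega : ¬((k-1) = 2 ∧ 0 < n)), add_zero]
  rw [hD]
  rw [Finset.sum_range
    (fun j => (opp (ZMod 2) n (k - 1) k 2 j 0 (DeltaB (ZMod 2) n 2)) (esum (ZMod 2) n (k-1)))]
  rw [Finsupp.finset_sum_apply]
  refine Finset.sum_congr rfl (fun j _ => ?_)
  rw [esum, map_sum, Finsupp.finset_sum_apply]
  refine Finset.sum_congr rfl (fun f _ => ?_)
  by_cases hC : Inc n f
  · rw [if_pos (show (∀ p q : Fin (k-1), p < q → f p < f q) ∧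
      (∀ p : Fin (k-1), ((f p) : ℕ) + 1 < n) from hC)]
    rw [opp_esum_term hk j f hC x]
    simp [hC]
  · rw [if_neg (show ¬((∀ p q : Fin (k-1), p < q → f p < f q) ∧
      (∀ p : Fin (k-1), ((f p) : ℕ) + 1 < n)) from hC)]
    rw [map_zero]
    simp [hC]

open Classical in
lemma count_SL (hn : 0 < n) (x : Fin k → Cell n) :
    (∑ j : Fin (k-1), ∑ f : Fin (k-1) → Fin n,
        (if Inc n f ∧ SL n k j f = x then (1 : ZMod 2) else 0)) =
      if ∃ (p : Fin k) (m : Fin n), Adm x p m ∧ RightAtt x p m then 1 else 0 := by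
  by_cases hE : ∃ (p : Fin k) (m : Fin n), Adm x p m ∧ RightAtt x p m
  · rw [if_pos hE]
    obtain ⟨p, m, ha, hr⟩ := hE
    obtain ⟨hj, hSL⟩ := adm_right_SL hn ha hr
    rw [Finset.sum_eq_single (⟨(p:ℕ), hj⟩ : Fin (k-1))]
    · rw [Finset.sum_eq_single (fx hn x p)]
      · rw [if_pos ⟨fx_inc hn ha, hSL⟩]
      · intro f _ hfne
        rw [if_neg]
        rintro ⟨hIf, hSf⟩
        exact hfne (SL_eq_fx hn _ f x hSf)
      · intro hmem; exact absurd (Finset.mem_univ _) hmem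
    · intro j _ hjne
      refine Finset.sum_eq_zero (fun f _ => ?_)
      rw [if_neg]
      rintro ⟨hIf, hSf⟩
      have hadm := (SL_eq_adm j f hIf x hSf).1
      have hval := congrArg Fin.val (adm_unique hadm ha).1
      exact hjne (Fin.ext hval)
    · intro hmem; exact absurd (Finset.mem_univ _) hmem
  · rw [if_neg hE]
    refine Finset.sum_eq_zero (fun j _ => Finset.sum_eq_zero (fun f _ => ?_))
    rw [if_neg]
    rintro ⟨hIf, hSf⟩
    have h2 := SL_eq_adm j f hIf x hSf
    exact hE ⟨_, _, h2.1, h2.2⟩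

open Classical in
lemma count_SR (hn : 0 < n) (x : Fin k → Cell n) :
    (∑ j : Fin (k-1), ∑ f : Fin (k-1) → Fin n,
        (if Inc n f ∧ SR n k j f = x then (1 : ZMod 2) else 0)) =
      if ∃ (p : Fin k) (m : Fin n), Adm x p m ∧ LeftAtt x p m then 1 else 0 := by
  by_cases hE : ∃ (p : Fin k) (m : Fin n), Adm x p m ∧ LeftAtt x p m
  · rw [if_pos hE]
    obtain ⟨p, m, ha, hl⟩ := hE
    obtain ⟨hp0, hj, hSR⟩ := adm_left_SR hn ha hl
    rw [Finset.sum_eq_single (⟨(p:ℕ)-1, hj⟩ : Fin (k-1))]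
    · rw [Finset.sum_eq_single (fx hn x p)]
      · rw [if_pos ⟨fx_inc hn ha, hSR⟩]
      · intro f _ hfne
        rw [if_neg]
        rintro ⟨hIf, hSf⟩
        have hadm := (SR_eq_adm _ f hIf x hSf).1
        have hval := congrArg Fin.val (adm_unique hadm ha).1
        have hfeq := SR_eq_fx hn _ f x hSf
        have hidx : (⟨(↑(⟨(p:ℕ)-1, hj⟩ : Fin (k-1)) : ℕ)+1,
            by have := hj; omega⟩ : Fin k) = p := Fin.ext (by simp; omega)
        rw [hidx] at hfeq
        exact hfne hfeq
      · intro hmem; exact absurd (Finset.mem_univ _) hmem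
    · intro j _ hjne
      refine Finset.sum_eq_zero (fun f _ => ?_)
      rw [if_neg]
      rintro ⟨hIf, hSf⟩
      have hadm := (SR_eq_adm j f hIf x hSf).1
      have hval := congrArg Fin.val (adm_unique hadm ha).1
      refine hjne (Fin.ext ?_)
      simp at hval ⊢
      omega
    · intro hmem; exact absurd (Finset.mem_univ _) hmem
  · rw [if_neg hE]
    refine Finset.sum_eq_zero (fun j _ => Finset.sum_eq_zero (fun f _ => ?_))
    rw [if_neg]
    rintro ⟨hIf, hSf⟩
    have h2 := SR_eq_adm j f hIf x hSf
    exact hE ⟨_, _, h2.1, h2.2⟩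

end Aux2

/-- Over `ℤ/2ℤ`, for `3 < k ≤ n`,
`Σ_{j=0}^{k-2} (1^{⊗j} ⊗ Δ₂ ⊗ 1^{⊗(k-2-j)})(Δ_{k-1}(P))` is exactly the sum (each summand
with coefficient 1) of the admissible basis tensors of `C^{⊗k}` that are singly attached:
every doubly attached term cancels and no unattached term occurs. -/


theorem D2_Dk1_characterization (n k : ℕ) (hn : 3 ≤ n) (hk : 3 < k) (hkn : k ≤ n) :
    ∀ x : Fin k → Cell n,
      (∑ j ∈ Finset.range (k - 1),
          (opp (ZMod 2) n (k - 1) k 2 j 0 (DeltaB (ZMod 2) n 2))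
            (DeltaB (ZMod 2) n (k - 1) Cell.F)) x = 1 ↔
        ∃ (p : Fin k) (m : Fin n), Adm x p m ∧ SinglyAtt x p m := by
  intro x
  classical
  have hn0 : 0 < n := by omega
  rw [LHS_eval hn hk x]
  have hsplit : (∑ j : Fin (k-1), ∑ f : Fin (k-1) → Fin n,
      ((if Inc n f ∧ SL n k j f = x then (1:ZMod 2) else 0) +
       (if Inc n f ∧ SR n k j f = x then (1:ZMod 2) else 0))) =
      (∑ j : Fin (k-1), ∑ f : Fin (k-1) → Fin n,
        (if Inc n f ∧ SL n k j f = x then (1:ZMod 2) else 0)) +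
      (∑ j : Fin (k-1), ∑ f : Fin (k-1) → Fin n,
        (if Inc n f ∧ SR n k j f = x then (1:ZMod 2) else 0)) := by
    rw [← Finset.sum_add_distrib]
    exact Finset.sum_congr rfl (fun j _ => Finset.sum_add_distrib)
  rw [hsplit, count_SL hn0 x, count_SR hn0 x]
  by_cases hR : ∃ (p : Fin k) (m : Fin n), Adm x p m ∧ RightAtt x p m <;>
    by_cases hL : ∃ (p : Fin k) (m : Fin n), Adm x p m ∧ LeftAtt x p m
  · rw [if_pos hR, if_pos hL]
    constructor
    · intro h; exact absurd h (by decide)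
    · rintro ⟨p, m, ha, hs⟩
      exfalso
      obtain ⟨p', m', ha', hr'⟩ := hR
      obtain ⟨p'', m'', ha'', hl''⟩ := hL
      obtain ⟨hpe, hme⟩ := adm_unique ha' ha
      obtain ⟨hpe2, hme2⟩ := adm_unique ha'' ha
      subst hpe; subst hme; subst hpe2; subst hme2
      rcases hs with ⟨-, hnr⟩ | ⟨hnl, -⟩
      · exact hnr hr'
      · exact hnl hl''
  · rw [if_pos hR, if_neg hL]
    constructor
    · intro _
      obtain ⟨p, m, ha, hr⟩ := hR
      refine ⟨p, m, ha, Or.inr ⟨?_, hr⟩⟩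
      intro hl
      exact hL ⟨p, m, ha, hl⟩
    · intro _; decide
  · rw [if_neg hR, if_pos hL]
    constructor
    · intro _
      obtain ⟨p, m, ha, hl⟩ := hL
      refine ⟨p, m, ha, Or.inl ⟨hl, ?_⟩⟩
      intro hr
      exact hR ⟨p, m, ha, hr⟩
    · intro _; decide
  · rw [if_neg hR, if_neg hL]
    constructor
    · intro h; exact absurd h (by decide)
    · rintro ⟨p, m, ha, hs⟩
      exfalso
      rcases hs with ⟨hl, -⟩ | ⟨-, hr⟩
      · exact hL ⟨p, m, ha, hl⟩
      · exact hR ⟨p, m, ha, hr⟩
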